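/- arXiv:2009.12256 — 2 statements merged into one kernel-verified Lean document; each statement's English description precedes it below -/
import Mathlib

section
/- Let T ≥ 1 and let X₀, X₁, …, X_T and Ξ₁, …, Ξ_T be nonempty finite types, and let f : X₀ × (Ξ₁ × X₁) × ⋯ × (Ξ_T × X_T) → ℝ be a payoff function. Define the alternating game value by backward recursion on partial histories: the value of a complete play is f evaluated at that play; the value of a history about to make an existential move from X_t is the minimum over X_t of the values of the extended histories; the value of a history about to make a universal move from Ξ_t is the maximum over Ξ_t of the values of the extended histories. Then the value of the empty history equals the minimum, over all nonanticipative policies consisting of x₀ ∈ X₀ together with functions σ_t : Ξ₁ × ⋯ × Ξ_t → X_t for t = 1, …, T, of the maximum over all adversary sequences (ξ₁, …, ξ_T) ∈ Ξ₁ × ⋯ × Ξ_T of f(x₀, ξ₁, σ₁(ξ₁), ξ₂, σ₂(ξ₁, ξ₂), …, ξ_T, σ_T(ξ₁, …, ξ_T)). -/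
/-- The value of an alternating game in which, for each stage `t = 0, …, T-1`
(representing stages `1, …, T`), first the adversary picks `ξ_t : Ξ t` and then
the decision maker picks `x_t : X t`, with payoff `f` evaluated at the complete
play.  It is defined by recursion on the number of stages, which unfolds exactly
the backward-recursion (nested `max`/`min`) value of the game tree:
`advVal T Ξ X f = ⨆ ξ_0, ⨅ x_0, ⨆ ξ_1, ⨅ x_1, … f`.  For finite nonempty move
sets all these infima and suprema over `ℝ` are attained, i.e. they are the
minima/maxima of the backward recursion. -/
noncomputable def advVal : (T : ℕ) → (Ξ : Fin T → Type) → (X : Fin T → Type) →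
    ((∀ t : Fin T, Ξ t × X t) → ℝ) → ℝ
  | 0, _, _, f => f finZeroElim
  | T + 1, Ξ, X, f =>
      ⨆ ξ : Ξ 0, ⨅ x : X 0,
        advVal T (fun t => Ξ t.succ) (fun t => X t.succ)
          (fun g => f (fun t => Fin.cases (motive := fun t => Ξ t × X t) (ξ, x) g t))

section Aux

variable {T : ℕ} {Ξ : Fin (T + 1) → Type}

/-- canonical history of length 0 -/
def hist0 (ξ0 : Ξ 0) : ∀ s : Fin (T + 1), s ≤ 0 → Ξ s :=
  fun s => Fin.cases (motive := fun s => s ≤ (0 : Fin (T + 1)) → Ξ s)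
    (fun _ => ξ0)
    (fun s' hs' => absurd (Fin.le_zero_iff.mp hs') (Fin.succ_ne_zero s')) s

lemma hist0_eq (h : ∀ s : Fin (T + 1), s ≤ 0 → Ξ s) :
    h = hist0 (h 0 le_rfl) := by
  funext s hs
  induction s using Fin.cases with
  | zero => simp [hist0]
  | succ s' => exact absurd (Fin.le_zero_iff.mp hs) (Fin.succ_ne_zero s')

/-- extend a shifted history by an initial adversary move -/
def extHist {t : Fin T} (ξ0 : Ξ 0) (h : ∀ s : Fin T, s ≤ t → Ξ s.succ) :
    ∀ s : Fin (T + 1), s ≤ t.succ → Ξ s :=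
  fun s => Fin.cases (motive := fun s => s ≤ t.succ → Ξ s)
    (fun _ => ξ0)
    (fun s' hs' => h s' (Fin.succ_le_succ_iff.mp hs')) s

lemma extHist_eq {t : Fin T} (h : ∀ s : Fin (T + 1), s ≤ t.succ → Ξ s) :
    h = extHist (h 0 (Fin.zero_le _))
      (fun s hs => h s.succ (Fin.succ_le_succ_iff.mpr hs)) := by
  funext s hs
  induction s using Fin.cases with
  | zero => simp [extHist]
  | succ s' => simp [extHist]

end Aux

theorem advVal_eq (T : ℕ) : ∀ (Ξ X : Fin T → Type)
    [∀ t, Finite (Ξ t)] [∀ t, Nonempty (Ξ t)]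
    [∀ t, Finite (X t)] [∀ t, Nonempty (X t)]
    (g : (∀ t : Fin T, Ξ t × X t) → ℝ),
    advVal T Ξ X g =
      ⨅ σ : ∀ t : Fin T, ((∀ s : Fin T, s ≤ t → Ξ s) → X t),
        ⨆ ξ : ∀ t : Fin T, Ξ t, g (fun t => (ξ t, σ t fun s _ => ξ s)) := by
  induction T with
  | zero =>
    intro Ξ X _ _ _ _ g
    rw [show advVal 0 Ξ X g = g finZeroElim from rfl, ciInf_unique, ciSup_unique]
    exact congrArg g (funext fun t => t.elim0)
  | succ T IH =>
    intro Ξ X _ _ _ _ g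
    have hrw : advVal (T + 1) Ξ X g =
        ⨆ ξ0 : Ξ 0, ⨅ x0 : X 0,
          ⨅ σ' : ∀ t : Fin T, ((∀ s : Fin T, s ≤ t → Ξ s.succ) → X t.succ),
            ⨆ ξ' : ∀ t : Fin T, Ξ t.succ,
              g (fun t => Fin.cases (motive := fun t => Ξ t × X t) (ξ0, x0)
                  (fun t' => (ξ' t', σ' t' fun s _ => ξ' s)) t) := by
      rw [advVal]
      exact iSup_congr fun ξ0 => iInf_congr fun x0 =>
        IH (fun t => Ξ t.succ) (fun t => X t.succ) _
    rw [hrw]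
    apply le_antisymm
    · -- sup-inf ≤ inf over full policies
      apply le_ciInf
      intro σ
      apply ciSup_le
      intro ξ0
      refine le_trans (ciInf_le (Finite.bddBelow_range _) (σ 0 (hist0 ξ0))) ?_
      refine le_trans (ciInf_le (Finite.bddBelow_range _)
        (fun (t : Fin T) h => σ t.succ (extHist ξ0 h))) ?_
      apply ciSup_le
      intro ξ'
      refine le_trans ?_ (le_ciSup (Finite.bddAbove_range _) (Fin.cons ξ0 ξ'))
      apply le_of_eq
      apply congrArg g
      funext t
      induction t using Fin.cases with
      | zero =>
        simp only [Fin.cases_zero, Fin.cons_zero]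
        congr 1
        rw [hist0_eq (fun s _ => Fin.cons ξ0 ξ' s)]
        simp
      | succ t' =>
        simp only [Fin.cases_succ, Fin.cons_succ]
        congr 1
        rw [extHist_eq (fun s _ => Fin.cons ξ0 ξ' s)]
        simp
    · -- inf over full policies ≤ sup-inf
      -- choose, for each ξ0, a minimizing pair (x0, σ')
      have hc : ∀ ξ0 : Ξ 0, ∃ p : X 0 ×
          (∀ t : Fin T, ((∀ s : Fin T, s ≤ t → Ξ s.succ) → X t.succ)),
          ∀ q : X 0 × (∀ t : Fin T, ((∀ s : Fin T, s ≤ t → Ξ s.succ) → X t.succ)), (⨆ ξ' : ∀ t : Fin T, Ξ t.succ,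
              g (fun t => Fin.cases (motive := fun t => Ξ t × X t) (ξ0, p.1)
                  (fun t' => (ξ' t', p.2 t' fun s _ => ξ' s)) t)) ≤
            (⨆ ξ' : ∀ t : Fin T, Ξ t.succ,
              g (fun t => Fin.cases (motive := fun t => Ξ t × X t) (ξ0, q.1)
                  (fun t' => (ξ' t', q.2 t' fun s _ => ξ' s)) t)) := fun ξ0 =>
        Finite.exists_min _
      choose c hcmin using hc
      -- assemble the full policy
      set σ : ∀ t : Fin (T + 1), ((∀ s : Fin (T + 1), s ≤ t → Ξ s) → X t) :=
        fun t => Fin.cases (motive := fun t => (∀ s, s ≤ t → Ξ s) → X t)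
          (fun h => (c (h 0 le_rfl)).1)
          (fun t' h => (c (h 0 (Fin.zero_le _))).2 t'
            (fun s hs => h s.succ (Fin.succ_le_succ_iff.mpr hs))) t with hσ
      refine le_trans (ciInf_le (Finite.bddBelow_range _) σ) ?_
      apply ciSup_le
      intro ξ
      refine le_trans ?_ (le_ciSup (Finite.bddAbove_range _) (ξ 0))
      refine le_trans ?_ (le_ciInf fun x0 => le_ciInf fun σ' =>
        hcmin (ξ 0) (x0, σ'))
      refine le_trans (le_of_eq ?_)
        (le_ciSup (Finite.bddAbove_range _) (fun t : Fin T => ξ t.succ))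
      apply congrArg g
      funext t
      induction t using Fin.cases with
      | zero => simp [hσ]
      | succ t' => simp [hσ]

/-- The alternating (nested min-max-min-…) value of a multistage robust problem,
in which the decision maker first picks `x₀ : X0` and then, for `T ≥ 1` stages,
the adversary reveals `ξ_t : Ξ t` before the decision maker picks `x_t : X t`,
equals the value of its deterministic equivalent: the minimum over all
nonanticipative policies — an initial decision `x₀` together with, for each
stage `t`, a map `σ t` from the adversary moves revealed so far (those of
stages `s ≤ t`) to a decision in `X t` — of the maximum over all adversary
sequences `ξ` of the payoff of the resulting play. -/
theorem multistage_game_value_eq_min_over_policies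
    (T : ℕ) (hT : 1 ≤ T) (X0 : Type) (X : Fin T → Type) (Ξ : Fin T → Type)
    [Fintype X0] [Nonempty X0]
    [∀ t, Fintype (X t)] [∀ t, Nonempty (X t)]
    [∀ t, Fintype (Ξ t)] [∀ t, Nonempty (Ξ t)]
    (f : X0 → (∀ t : Fin T, Ξ t × X t) → ℝ) :
    (⨅ x₀ : X0, advVal T Ξ X (f x₀)) =
      ⨅ x₀ : X0, ⨅ σ : ∀ t : Fin T, ((∀ s : Fin T, s ≤ t → Ξ s) → X t),
        ⨆ ξ : ∀ t : Fin T, Ξ t,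
          f x₀ (fun t => (ξ t, σ t fun s _ => ξ s)) := by
  exact iInf_congr fun x₀ => advVal_eq T Ξ X (f x₀)
end

section
/- Let T ≥ 1 and let X₀, X₁, …, X_T and Ξ₁, …, Ξ_T be nonempty finite types, and let f : X₀ × (Ξ₁ × X₁) × ⋯ × (Ξ_T × X_T) → EReal be a payoff function with values in the extended reals (the value +∞ encoding plays that violate the existential constraint system). Define the alternating game value by backward recursion on partial histories: the value of a complete play is f evaluated at that play; the value of a history about to make an existential move from X_t is the infimum over X_t of the values of the extended histories; the value of a history about to make a universal move from Ξ_t is the supremum over Ξ_t of the values of the extended histories. Then the value of the empty history equals the infimum, over all nonanticipative policies consisting of x₀ ∈ X₀ together with functions σ_t : Ξ₁ × ⋯ × Ξ_t → X_t for t = 1, …, T, of the supremum over all adversary sequences (ξ₁, …, ξ_T) ∈ Ξ₁ × ⋯ × Ξ_T of f(x₀, ξ₁, σ₁(ξ₁), …, ξ_T, σ_T(ξ₁, …, ξ_T)). -/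
/-- The value (in the extended reals) of an alternating game in which, for each
stage `t = 0, …, T-1` (representing stages `1, …, T`), first the adversary picks
`ξ_t : Ξ t` and then the decision maker picks `x_t : X t`, with payoff `f`
evaluated at the complete play (`+∞` encoding plays violating the existential
constraint system).  It is defined by recursion on the number of stages, which
unfolds exactly the backward-recursion (nested `sup`/`inf`) value of the game
tree: `advValE T Ξ X f = ⨆ ξ_0, ⨅ x_0, ⨆ ξ_1, ⨅ x_1, … f`. -/
noncomputable def advValE : (T : ℕ) → (Ξ : Fin T → Type) → (X : Fin T → Type) →
    ((∀ t : Fin T, Ξ t × X t) → EReal) → EReal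
  | 0, _, _, f => f finZeroElim
  | T + 1, Ξ, X, f =>
      ⨆ ξ : Ξ 0, ⨅ x : X 0,
        advValE T (fun t => Ξ t.succ) (fun t => X t.succ)
          (fun g => f (fun t => Fin.cases (motive := fun t => Ξ t × X t) (ξ, x) g t))

lemma advValE_eq : ∀ (T : ℕ) (Ξ X : Fin T → Type) [∀ t, Nonempty (X t)]
    [∀ t, Nonempty (Ξ t)] (g : (∀ t : Fin T, Ξ t × X t) → EReal),
    advValE T Ξ X g =
      ⨅ σ : ∀ t : Fin T, ((∀ s : Fin T, s ≤ t → Ξ s) → X t),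
        ⨆ ξ : ∀ t : Fin T, Ξ t, g (fun t => (ξ t, σ t fun s _ => ξ s))
  | 0, Ξ, X, _, _, g => by
    have h : ∀ (σ : ∀ t : Fin 0, ((∀ s : Fin 0, s ≤ t → Ξ s) → X t)) (ξ : ∀ t : Fin 0, Ξ t),
        (fun t => (ξ t, σ t fun s _ => ξ s)) = (finZeroElim : ∀ t : Fin 0, Ξ t × X t) :=
      fun σ ξ => funext fun t => t.elim0
    simp only [h, iSup_const, iInf_const]
    rfl
  | T + 1, Ξ, X, _, _, g => by
    -- abbreviations
    set Pol' := ∀ t : Fin T, ((∀ s : Fin T, s ≤ t → Ξ s.succ) → X t.succ) with hPol'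
    -- unfold one step and apply IH
    have step : advValE (T + 1) Ξ X g =
        ⨆ ξ0 : Ξ 0, ⨅ p : X 0 × Pol', ⨆ ξ' : ∀ t : Fin T, Ξ t.succ,
          g (fun t => Fin.cases (motive := fun t => Ξ t × X t) (ξ0, p.1)
              (fun t => (ξ' t, p.2 t fun s _ => ξ' s)) t) := by
      show (⨆ ξ0 : Ξ 0, ⨅ x : X 0, advValE T _ _ _) = _
      refine iSup_congr fun ξ0 => ?_
      rw [iInf_prod]
      exact iInf_congr fun x => by
        rw [advValE_eq T (fun t => Ξ t.succ) (fun t => X t.succ)]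
    rw [step, iSup_iInf_eq]
    -- now both sides are infima
    apply le_antisymm
    · refine le_iInf fun σ => ?_
      -- choose c from σ
      refine iInf_le_of_le (fun ξ0 =>
        (σ 0 (fun s => Fin.cases (motive := fun s => s ≤ (0 : Fin (T+1)) → Ξ s)
            (fun _ => ξ0) (fun i h => absurd (Fin.le_zero_iff.mp h) (Fin.succ_ne_zero i)) s),
         fun t hist => σ t.succ (fun s => Fin.cases (motive := fun s => s ≤ t.succ → Ξ s)
            (fun _ => ξ0) (fun i hi => hist i (Fin.succ_le_succ_iff.mp hi)) s))) ?_
      refine iSup_le fun ξ0 => iSup_le fun ξ' => ?_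
      refine le_trans (le_of_eq ?_) (le_iSup _ (Fin.cases ξ0 ξ' : ∀ t : Fin (T+1), Ξ t))
      congr 1
      funext t
      induction t using Fin.cases with
      | zero =>
        simp only [Fin.cases_zero]
        refine Prod.ext rfl ?_
        simp only
        congr 1
        funext s h
        induction s using Fin.cases with
        | zero => rfl
        | succ i => exact absurd (Fin.le_zero_iff.mp h) (Fin.succ_ne_zero _)
      | succ i =>
        simp only [Fin.cases_succ]
        refine Prod.ext rfl ?_
        simp only
        congr 1
        funext s h
        induction s using Fin.cases with
        | zero => rfl
        | succ j => simp
    · refine le_iInf fun c => ?_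
      -- choose σ from c
      refine iInf_le_of_le (fun t => Fin.cases
          (motive := fun t => (∀ s : Fin (T+1), s ≤ t → Ξ s) → X t)
          (fun hist => (c (hist 0 le_rfl)).1)
          (fun t hist => (c (hist 0 (Fin.zero_le _))).2 t
            (fun (s : Fin T) (hs : s ≤ t) => hist s.succ (Fin.succ_le_succ_iff.mpr hs))) t) ?_
      refine iSup_le fun ξ => ?_
      refine le_trans (le_of_eq ?_) (le_iSup₂ (f := fun ξ0 ξ' => g _) (ξ 0) (fun (t : Fin T) => ξ t.succ))
      congr 1
      funext t
      induction t using Fin.cases with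
      | zero => simp
      | succ i => simp


/-- The alternating (nested inf-sup-inf-…) value of a multistage robust problem
with extended-real payoff (`+∞` encoding violation of the existential
constraints), in which the decision maker first picks `x₀ : X0` and then, for
`T ≥ 1` stages, the adversary reveals `ξ_t : Ξ t` before the decision maker
picks `x_t : X t`, equals the value of its deterministic equivalent: the
infimum over all nonanticipative policies — an initial decision `x₀` together
with, for each stage `t`, a map `σ t` from the adversary moves revealed so far
(those of stages `s ≤ t`) to a decision in `X t` — of the supremum over all
adversary sequences `ξ` of the payoff of the resulting play. -/
theorem multistage_game_value_eq_inf_over_policies_EReal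
    (T : ℕ) (hT : 1 ≤ T) (X0 : Type) (X : Fin T → Type) (Ξ : Fin T → Type)
    [Fintype X0] [Nonempty X0]
    [∀ t, Fintype (X t)] [∀ t, Nonempty (X t)]
    [∀ t, Fintype (Ξ t)] [∀ t, Nonempty (Ξ t)]
    (f : X0 → (∀ t : Fin T, Ξ t × X t) → EReal) :
    (⨅ x₀ : X0, advValE T Ξ X (f x₀)) =
      ⨅ x₀ : X0, ⨅ σ : ∀ t : Fin T, ((∀ s : Fin T, s ≤ t → Ξ s) → X t),
        ⨆ ξ : ∀ t : Fin T, Ξ t,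
          f x₀ (fun t => (ξ t, σ t fun s _ => ξ s)) := by
  exact iInf_congr fun x₀ => advValE_eq T Ξ X (f x₀)
end
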